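/- Let p be a prime and f : R → A a ring homomorphism of F_p-algebras. If the relative Frobenius F_{A/R} : A ⊗_R F_*R → F_*A admits a left inverse as a ring homomorphism (equivalently F_{A/R} is a split surjection of rings), and the e-th relative Frobenius F^e_{A/R} : A ⊗_{R,F^e} R → F^e_*A is an isomorphism for some e ≥ 1, then F_{A/R} itself is an isomorphism. -/

import Mathlib

open TensorProduct

/-- `FStar p R` is `R` viewed as an `R`-algebra via the Frobenius `r ↦ r ^ p`. -/
def FStar (_p : ℕ) (R : Type*) : Type _ := R

instance (p : ℕ) (R : Type*) [CommRing R] : CommRing (FStar p R) :=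
  inferInstanceAs (CommRing R)

noncomputable instance (p : ℕ) (R A : Type*) [CommRing R] [CommRing A] [Algebra R A]
    [ExpChar A p] : Algebra R (FStar p A) :=
  ((frobenius A p).comp (algebraMap R A)).toAlgebra

/-- Frobenius of `A`, as a map `A →ₐ[R] FStar p A`. -/
noncomputable def frobAlgHom (p : ℕ) (R A : Type*) [CommRing R] [CommRing A] [Algebra R A]
    [ExpChar A p] : A →ₐ[R] FStar p A :=
  { frobenius A p with commutes' := fun _ => rfl }

/-- The structure map `F_*R → F_*A`, as a map of `R`-algebras. -/
noncomputable def fstarAlgHom (p : ℕ) (R A : Type*) [CommRing R] [CommRing A] [Algebra R A]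
    [ExpChar R p] [ExpChar A p] : FStar p R →ₐ[R] FStar p A :=
  { (algebraMap R A : R →+* A) with
    commutes' := fun r => by
      show (algebraMap R A) (frobenius R p (algebraMap R R r)) = frobenius A p (algebraMap R A r)
      simp [frobenius_def, map_pow] }

/-- The relative Frobenius `A ⊗[R] F_*R → F_*A`, `a ⊗ r ↦ a^p · r`. -/
noncomputable def relFrob (p : ℕ) (R A : Type*) [CommRing R] [CommRing A] [Algebra R A]
    [ExpChar R p] [ExpChar A p] : (A ⊗[R] FStar p R) →ₐ[R] FStar p A :=
  Algebra.TensorProduct.productMap (frobAlgHom p R A) (fstarAlgHom p R A)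

/-- `FStarE p e R` is `R` viewed as an `R`-algebra via the `e`-th iterate of Frobenius. -/
def FStarE (_p _e : ℕ) (R : Type*) : Type _ := R

instance (p e : ℕ) (R : Type*) [CommRing R] : CommRing (FStarE p e R) :=
  inferInstanceAs (CommRing R)

noncomputable instance (p e : ℕ) (R A : Type*) [CommRing R] [CommRing A] [Algebra R A]
    [ExpChar A p] : Algebra R (FStarE p e A) :=
  ((iterateFrobenius A p e).comp (algebraMap R A)).toAlgebra

/-- The `e`-th iterate of Frobenius of `A`, as a map `A →ₐ[R] FStarE p e A`. -/
noncomputable def frobAlgHomE (p e : ℕ) (R A : Type*) [CommRing R] [CommRing A] [Algebra R A]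
    [ExpChar A p] : A →ₐ[R] FStarE p e A :=
  { iterateFrobenius A p e with commutes' := fun _ => rfl }

/-- The structure map `F^e_*R → F^e_*A`, as a map of `R`-algebras. -/
noncomputable def fstarAlgHomE (p e : ℕ) (R A : Type*) [CommRing R] [CommRing A] [Algebra R A]
    [ExpChar R p] [ExpChar A p] : FStarE p e R →ₐ[R] FStarE p e A :=
  { (algebraMap R A : R →+* A) with
    commutes' := fun r => by
      show (algebraMap R A) (iterateFrobenius R p e (algebraMap R R r))
          = iterateFrobenius A p e (algebraMap R A r)
      simp [iterateFrobenius_def, map_pow] }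

/-- The `e`-th relative Frobenius `A ⊗[R] F^e_*R → F^e_*A`, `a ⊗ r ↦ a^{p^e} · r`. -/
noncomputable def relFrobE (p e : ℕ) (R A : Type*) [CommRing R] [CommRing A] [Algebra R A]
    [ExpChar R p] [ExpChar A p] : (A ⊗[R] FStarE p e R) →ₐ[R] FStarE p e A :=
  Algebra.TensorProduct.productMap (frobAlgHomE p e R A) (fstarAlgHomE p e R A)

/-- if the relative Frobenius of `R → A` admits a left inverse as a ring
homomorphism and the `e`-th relative Frobenius is an isomorphism for some `e ≥ 1`, then the
relative Frobenius itself is an isomorphism. -/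
theorem stmt_4 (p : ℕ) [Fact p.Prime] (R A : Type*) [CommRing R] [CommRing A] [Algebra R A]
    [CharP R p] [CharP A p]
    (hsplit : ∃ g : FStar p A →+* A ⊗[R] FStar p R,
      g.comp (relFrob p R A).toRingHom = RingHom.id _)
    (he : ∃ e ≥ 1, Function.Bijective (relFrobE p e R A)) :
    Function.Bijective (relFrob p R A) := by
  obtain ⟨g, hg⟩ := hsplit
  obtain ⟨e, he1, hbij⟩ := he
  constructor
  · exact Function.LeftInverse.injective (g := g) (fun x => RingHom.congr_fun hg x)
  · intro x
    have key : ∀ t : A ⊗[R] FStarE p e R,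
        ∃ s : A ⊗[R] FStar p R, (relFrob p R A s : A) = (relFrobE p e R A t : A) := by
      intro t
      induction t using TensorProduct.induction_on with
      | zero => exact ⟨0, by simp; rfl⟩
      | tmul a r =>
        refine ⟨(a ^ p ^ (e - 1)) ⊗ₜ[R] (r : FStar p R), ?_⟩
        show (frobAlgHom p R A (a ^ p ^ (e - 1)) * fstarAlgHom p R A r : A)
            = (frobAlgHomE p e R A a * fstarAlgHomE p e R A r : A)
        show ((a ^ p ^ (e - 1)) ^ p * algebraMap R A r : A)
            = (a ^ p ^ e * algebraMap R A r : A)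
        rw [← pow_mul, ← pow_succ, Nat.sub_add_cancel he1]
      | add u v hu hv =>
        obtain ⟨s1, h1⟩ := hu
        obtain ⟨s2, h2⟩ := hv
        exact ⟨s1 + s2, by rw [map_add, map_add]; exact congrArg₂ (· + ·) h1 h2⟩
    obtain ⟨t, ht⟩ := hbij.2 (x : FStarE p e A)
    obtain ⟨s, hs⟩ := key t
    exact ⟨s, by rw [show (relFrob p R A s) = ((relFrob p R A s : A) : FStar p A) from rfl, hs, ht]⟩
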